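/- Any optimal solution of the AUGMECON scalarized problem max f₁(x) + eps·Σ_{k=2}^p s_k/r_k subject to f_k(x) − s_k = e_k, s_k ≥ 0, x ∈ X, with eps > 0 and r_k > 0, is Pareto optimal for the multi-objective problem of maximizing (f₁,…,f_p) over X. -/
import Mathlib

/-- Any optimal solution of the AUGMECON scalarized problem
`max f₁(x) + eps·Σ_k s_k / r_k` subject to `f_k(x) − s_k = e_k`, `s_k ≥ 0`,
with `eps > 0` and `r_k > 0`, is Pareto optimal for maximizing `(f₁, …, f_p)`. -/
theorem stmt2 {X : Type*} [Nonempty X] {K : Type*} [Fintype K]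
    (f1 : X → ℝ) (f : K → X → ℝ) (e : K → ℝ) (r : K → ℝ) (eps : ℝ)
    (hr : ∀ k, 0 < r k) (heps : 0 < eps)
    (xstar : X) (sstar : K → ℝ)
    (hfeas : (∀ k, f k xstar - sstar k = e k) ∧ (∀ k, 0 ≤ sstar k))
    (hopt : ∀ (x : X) (s : K → ℝ),
      (∀ k, f k x - s k = e k) → (∀ k, 0 ≤ s k) →
      f1 x + eps * ∑ k, s k / r k ≤ f1 xstar + eps * ∑ k, sstar k / r k) :
    ¬ ∃ x : X, (f1 xstar ≤ f1 x ∧ ∀ k, f k xstar ≤ f k x) ∧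
      (f1 xstar < f1 x ∨ ∃ k, f k xstar < f k x) := by
  rintro ⟨x, ⟨h1, hk⟩, hstrict⟩
  obtain ⟨hfe, hnn⟩ := hfeas
  set s : K → ℝ := fun k => f k x - e k with hs
  have hse : ∀ k, s k = sstar k + (f k x - f k xstar) := by
    intro k; simp [hs, ← hfe k]; ring
  have hfeas' : ∀ k, f k x - s k = e k := by intro k; simp [hs]
  have hnn' : ∀ k, 0 ≤ s k := by
    intro k; rw [hse k]
    have := hk k
    have := hnn k
    linarith
  have hge : ∀ k, sstar k ≤ s k := by
    intro k; rw [hse k]; have := hk k; linarith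
  have hsum : ∑ k, sstar k / r k ≤ ∑ k, s k / r k :=
    Finset.sum_le_sum fun k _ => by gcongr; exacts [(hr k).le, hge k]
  have hle := hopt x s hfeas' hnn'
  rcases hstrict with h | ⟨k0, hk0⟩
  · nlinarith
  · have hsum' : ∑ k, sstar k / r k < ∑ k, s k / r k := by
      apply Finset.sum_lt_sum (fun k _ => by gcongr; exacts [(hr k).le, hge k])
      exact ⟨k0, Finset.mem_univ k0, by
        have : sstar k0 < s k0 := by rw [hse k0]; linarith
        gcongr
        exact hr k0⟩
    nlinarith
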